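/- Let t ≥ 0 and n ≥ 12t + 54 be integers and let G be a triangle-free simple graph on n vertices with e(G) ≥ n²/4 − n/2 − 6t − 11. Then G has at most 7 vertices v with d_G(v) < 3n/8. -/

import Mathlib

open Finset SimpleGraph

section Mantel

variable {V : Type*} [Fintype V] [DecidableEq V] (G : SimpleGraph V) [DecidableRel G.Adj]

lemma my_double_count (f : V → ℕ) :
    ∑ u, ∑ v ∈ G.neighborFinset u, f v = ∑ v, G.degree v * f v := by
  have h : ∀ u, G.neighborFinset u = univ.filter (fun v => G.Adj u v) := by
    intro u; ext v; simp [mem_neighborFinset]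
  calc ∑ u, ∑ v ∈ G.neighborFinset u, f v
      = ∑ u, ∑ v, if G.Adj u v then f v else 0 := by
        simp_rw [h, Finset.sum_filter]
    _ = ∑ v, ∑ u, if G.Adj u v then f v else 0 := Finset.sum_comm
    _ = ∑ v, G.degree v * f v := by
        refine Finset.sum_congr rfl fun v _ => ?_
        rw [← Finset.sum_filter]
        have : univ.filter (fun u => G.Adj u v) = G.neighborFinset v := by
          ext u; simp [mem_neighborFinset, adj_comm]
        rw [this, Finset.sum_const, card_neighborFinset_eq_degree, smul_eq_mul]

lemma my_deg_add_deg (hfree : G.CliqueFree 3) {u v : V} (huv : G.Adj u v) :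
    G.degree u + G.degree v ≤ Fintype.card V := by
  have hdisj : Disjoint (G.neighborFinset u) (G.neighborFinset v) := by
    rw [Finset.disjoint_left]
    intro w hwu hwv
    rw [mem_neighborFinset] at hwu hwv
    exact hfree {u, v, w} (is3Clique_triple_iff.2 ⟨huv, hwu, hwv⟩)
  calc G.degree u + G.degree v
      = (G.neighborFinset u ∪ G.neighborFinset v).card := by
        rw [Finset.card_union_of_disjoint hdisj,
          card_neighborFinset_eq_degree, card_neighborFinset_eq_degree]
    _ ≤ Fintype.card V := Finset.card_le_univ _

lemma my_sum_sq (hfree : G.CliqueFree 3) :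
    ∑ v, G.degree v * G.degree v ≤ Fintype.card V * G.edgeFinset.card := by
  have key : 2 * ∑ v, G.degree v * G.degree v ≤ 2 * (Fintype.card V * G.edgeFinset.card) := by
    have h1 : ∑ u, ∑ v ∈ G.neighborFinset u, (G.degree u + G.degree v)
        ≤ ∑ u, ∑ _v ∈ G.neighborFinset u, Fintype.card V := by
      refine Finset.sum_le_sum fun u _ => Finset.sum_le_sum fun v hv => ?_
      exact my_deg_add_deg G hfree ((mem_neighborFinset _ _ _).1 hv)
    have h2 : ∑ u, ∑ _v ∈ G.neighborFinset u, Fintype.card V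
        = 2 * G.edgeFinset.card * Fintype.card V := by
      simp_rw [Finset.sum_const, card_neighborFinset_eq_degree, smul_eq_mul]
      rw [← Finset.sum_mul, G.sum_degrees_eq_twice_card_edges]
    have h3 : ∑ u, ∑ v ∈ G.neighborFinset u, (G.degree u + G.degree v)
        = 2 * ∑ v, G.degree v * G.degree v := by
      simp_rw [Finset.sum_add_distrib]
      rw [my_double_count G (fun v => G.degree v)]
      have : ∑ u, ∑ _v ∈ G.neighborFinset u, G.degree u
          = ∑ u, G.degree u * G.degree u := by
        simp_rw [Finset.sum_const, card_neighborFinset_eq_degree, smul_eq_mul]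
      rw [this, two_mul]
    calc 2 * ∑ v, G.degree v * G.degree v
        = ∑ u, ∑ v ∈ G.neighborFinset u, (G.degree u + G.degree v) := h3.symm
      _ ≤ ∑ u, ∑ _v ∈ G.neighborFinset u, Fintype.card V := h1
      _ = 2 * G.edgeFinset.card * Fintype.card V := h2
      _ = 2 * (Fintype.card V * G.edgeFinset.card) := by ring
  omega

/-- Mantel's theorem (real form): a triangle-free graph has at most `n²/4` edges. -/
lemma my_mantel (hfree : G.CliqueFree 3) :
    (G.edgeFinset.card : ℝ) ≤ (Fintype.card V : ℝ) ^ 2 / 4 := by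
  rcases Nat.eq_zero_or_pos G.edgeFinset.card with h | h
  · rw [h]; push_cast; positivity
  · have hcs := sq_sum_le_card_mul_sum_sq (s := (univ : Finset V))
      (f := fun v => (G.degree v : ℝ))
    have hsum : ∑ v, (G.degree v : ℝ) = 2 * G.edgeFinset.card := by
      rw [← Nat.cast_sum]
      exact_mod_cast congrArg (Nat.cast : ℕ → ℝ) G.sum_degrees_eq_twice_card_edges
    have hsq : ∑ v, (G.degree v : ℝ) ^ 2 ≤ (Fintype.card V : ℝ) * G.edgeFinset.card := by
      have := my_sum_sq G hfree
      have hc : ((∑ v, G.degree v * G.degree v : ℕ) : ℝ)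
          ≤ ((Fintype.card V * G.edgeFinset.card : ℕ) : ℝ) := Nat.cast_le.2 this
      push_cast at hc
      simpa [sq] using hc
    rw [Finset.card_univ, hsum] at hcs
    have he : (0 : ℝ) < G.edgeFinset.card := by exact_mod_cast h
    nlinarith [hcs, hsq, he]

end Mantel

/-- Let `t ≥ 0`, `n ≥ 12t + 54` and let `G` be a triangle-free graph on `n` vertices with
`e(G) ≥ n²/4 - n/2 - 6t - 11`. Then `G` has at most `7` vertices `v` with
`d_G(v) < 3n/8`. -/
theorem few_low_degree_vertices (t n : ℕ) (hn : 12 * t + 54 ≤ n)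
    (G : SimpleGraph (Fin n)) [DecidableRel G.Adj] (hfree : G.CliqueFree 3)
    (he : (n : ℝ) ^ 2 / 4 - (n : ℝ) / 2 - 6 * t - 11 ≤ (G.edgeFinset.card : ℝ)) :
    (Finset.univ.filter fun v : Fin n => (G.degree v : ℝ) < 3 * n / 8).card ≤ 7 := by
  by_contra hcon
  push_neg at hcon
  obtain ⟨S, hSsub, hScard⟩ := Finset.exists_subset_card_eq (n := 8) hcon
  set T : Finset (Fin n) := Sᶜ with hT
  -- the induced subgraph on the complement of S
  let G' : SimpleGraph {x : Fin n // x ∈ T} := G.comap (Subtype.val)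
  haveI : DecidableRel G'.Adj := fun a b => ‹DecidableRel G.Adj› a.1 b.1
  have hfree' : G'.CliqueFree 3 :=
    CliqueFree.comap (SimpleGraph.Embedding.comap
      (Function.Embedding.subtype (· ∈ T)) G).isContained hfree
  have hcardT : Fintype.card {x : Fin n // x ∈ T} = n - 8 := by
    rw [Fintype.card_coe, hT, Finset.card_compl, hScard, Fintype.card_fin]
  -- edges with an endpoint in S vs edges avoiding S
  have hsplit : G.edgeFinset.card
      ≤ G'.edgeFinset.card + ∑ v ∈ S, G.degree v := by
    classical
    set A := G.edgeFinset.filter (fun e => ∃ v ∈ S, v ∈ e) with hA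
    set B := G.edgeFinset.filter (fun e => ¬∃ v ∈ S, v ∈ e) with hB
    have hAB : A.card + B.card = G.edgeFinset.card :=
      Finset.card_filter_add_card_filter_not _
    have hAle : A.card ≤ ∑ v ∈ S, G.degree v := by
      have hsub : A ⊆ S.biUnion (fun v => G.incidenceFinset v) := by
        intro e heA
        rw [hA, Finset.mem_filter] at heA
        obtain ⟨heE, v, hvS, hve⟩ := heA
        refine Finset.mem_biUnion.2 ⟨v, hvS, ?_⟩
        rw [mem_incidenceFinset]
        exact ⟨(mem_edgeFinset).1 heE, hve⟩
      calc A.card ≤ (S.biUnion (fun v => G.incidenceFinset v)).card :=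
            Finset.card_le_card hsub
        _ ≤ ∑ v ∈ S, (G.incidenceFinset v).card := Finset.card_biUnion_le
        _ = ∑ v ∈ S, G.degree v := by
            exact Finset.sum_congr rfl fun v _ => by
              simp [card_incidenceFinset_eq_degree]
    have hBle : B.card ≤ G'.edgeFinset.card := by
      refine Finset.card_le_card_of_surjOn (Sym2.map Subtype.val) ?_
      intro e heB
      simp only [Finset.coe_filter, Set.mem_setOf_eq, hB] at heB
      obtain ⟨heE, hnot⟩ := heB
      induction e with
      | _ a b =>
        have hab : G.Adj a b := (mem_edgeFinset).1 heE
        have haT : a ∈ T := by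
          rw [hT, Finset.mem_compl]
          intro haS; exact hnot ⟨a, haS, Sym2.mem_mk_left a b⟩
        have hbT : b ∈ T := by
          rw [hT, Finset.mem_compl]
          intro hbS; exact hnot ⟨b, hbS, Sym2.mem_mk_right a b⟩
        refine ⟨s(⟨a, haT⟩, ⟨b, hbT⟩), ?_, rfl⟩
        simp only [Finset.mem_coe, mem_edgeFinset]
        exact hab
    omega
  -- Mantel on the induced graph
  have hmantel : (G'.edgeFinset.card : ℝ) ≤ ((n : ℝ) - 8) ^ 2 / 4 := by
    have := my_mantel G' hfree'
    rw [hcardT] at this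
    have h8n : (8 : ℕ) ≤ n := by omega
    rwa [Nat.cast_sub h8n] at this
  -- sum of degrees over S is small
  have hSne : S.Nonempty := Finset.card_pos.1 (by rw [hScard]; norm_num)
  have hdegS : (∑ v ∈ S, (G.degree v : ℝ)) < 3 * n := by
    have := Finset.sum_lt_sum_of_nonempty hSne
      (f := fun v => (G.degree v : ℝ)) (g := fun _ => 3 * (n : ℝ) / 8)
      (fun v hv => by
        have := hSsub hv
        rw [Finset.mem_filter] at this
        exact this.2)
    rw [Finset.sum_const, hScard] at this
    calc (∑ v ∈ S, (G.degree v : ℝ)) < (8 : ℕ) • (3 * (n : ℝ) / 8) := this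
      _ = 3 * n := by push_cast; ring
  -- put it together
  have hsplitR : (G.edgeFinset.card : ℝ)
      ≤ (G'.edgeFinset.card : ℝ) + ∑ v ∈ S, (G.degree v : ℝ) := by
    have := (Nat.cast_le (α := ℝ)).2 hsplit
    push_cast at this
    exact this
  have hnR : (12 * (t : ℝ) + 54) ≤ n := by exact_mod_cast hn
  nlinarith [he, hsplitR, hmantel, hdegS, hnR]
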